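/- If K is an even subdivision of T with its unique perfect matching M, then for every edge e of K not in M, the graph K - e is a König-Egerváry graph. -/

import Mathlib

open SimpleGraph

variable {V : Type*}

/-- A graph has a perfect matching. -/
def HasPM (G : SimpleGraph V) : Prop := ∃ M : G.Subgraph, M.IsPerfectMatching

/-- A set of vertices is independent (pairwise nonadjacent). -/
def IsIndep (G : SimpleGraph V) (s : Set V) : Prop := ∀ x ∈ s, ∀ y ∈ s, ¬ G.Adj x y

/-- The independence number. -/
noncomputable def alphaNum (G : SimpleGraph V) : ℕ :=
  sSup {n | ∃ s : Set V, IsIndep G s ∧ s.ncard = n}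

/-- The matching number. -/
noncomputable def matchNum (G : SimpleGraph V) : ℕ :=
  sSup {n | ∃ M : G.Subgraph, M.IsMatching ∧ M.edgeSet.ncard = n}

/-- A graph is König-Egerváry if α + ν = n. -/
def IsKE (G : SimpleGraph V) : Prop := alphaNum G + matchNum G = Nat.card V

/-- `G` is (the whole graph) an even subdivision of `K₄`: four corner vertices and six
internally disjoint odd paths joining each pair of corners, comprising all vertices
and edges of `G`. -/
def IsEvenSubdivK4 (G : SimpleGraph V) : Prop :=
  ∃ (c : Fin 4 → V) (P : ∀ i j : Fin 4, G.Walk (c i) (c j)),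
    Function.Injective c ∧
    (∀ i j : Fin 4, P j i = (P i j).reverse) ∧
    (∀ i j : Fin 4, i ≠ j → (P i j).IsPath ∧ Odd (P i j).length) ∧
    (∀ i j k l : Fin 4, i ≠ j → k ≠ l → ¬(i = k ∧ j = l) → ¬(i = l ∧ j = k) →
      ∀ x : V, x ∈ (P i j).support → x ∈ (P k l).support → x ∈ Set.range c) ∧
    (∀ x : V, ∃ i j : Fin 4, i ≠ j ∧ x ∈ (P i j).support) ∧
    (∀ e : Sym2 V, e ∈ G.edgeSet ↔ ∃ i j : Fin 4, i ≠ j ∧ e ∈ (P i j).edges)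

/-- `G` is (the whole graph) an even subdivision of `T`: two vertex-disjoint odd cycles
joined at blossom tips `v`, `w` by an odd path internally disjoint from the cycles,
comprising all vertices and edges of `G`. -/
def IsEvenSubdivT (G : SimpleGraph V) : Prop :=
  ∃ (v w : V) (C1 : G.Walk v v) (C2 : G.Walk w w) (P : G.Walk v w),
    C1.IsCycle ∧ C2.IsCycle ∧ Odd C1.length ∧ Odd C2.length ∧
    P.IsPath ∧ Odd P.length ∧
    (∀ x : V, x ∈ C1.support → x ∉ C2.support) ∧
    (∀ x : V, x ∈ P.support → x ∈ C1.support → x = v) ∧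
    (∀ x : V, x ∈ P.support → x ∈ C2.support → x = w) ∧
    (∀ x : V, x ∈ C1.support ∨ x ∈ C2.support ∨ x ∈ P.support) ∧
    (∀ e : Sym2 V, e ∈ G.edgeSet ↔ e ∈ C1.edges ∨ e ∈ C2.edges ∨ e ∈ P.edges)

/-- `G` contains a nice even subdivision of `T`: a subgraph `H` which is an even
subdivision of `T` and such that `G - V(H)` has a perfect matching. -/
def HasNiceEvenSubdivT (G : SimpleGraph V) : Prop :=
  ∃ H : G.Subgraph, IsEvenSubdivT H.coe ∧ HasPM (G.induce (H.vertsᶜ))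

/-- `G` has a spanning subgraph whose components are independent edges together with a
positive number of vertex-disjoint odd cycles. -/
def HasOddCycleCover (G : SimpleGraph V) : Prop :=
  ∃ (M : G.Subgraph) (k : ℕ) (u : Fin k → V) (C : ∀ i : Fin k, G.Walk (u i) (u i)),
    0 < k ∧ M.IsMatching ∧
    (∀ i, (C i).IsCycle ∧ Odd (C i).length) ∧
    (∀ i j, i ≠ j → ∀ x : V, x ∈ (C i).support → x ∉ (C j).support) ∧
    (∀ i, ∀ x ∈ (C i).support, x ∉ M.verts) ∧
    (∀ x : V, x ∈ M.verts ∨ ∃ i, x ∈ (C i).support)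

/-- A matchable graph is Egerváry iff it has no such spanning cover. -/
def IsEgervary (G : SimpleGraph V) : Prop := ¬ HasOddCycleCover G

/-- `G` contains two vertex-disjoint odd cycles. -/
def TwoDisjointOddCycles (G : SimpleGraph V) : Prop :=
  ∃ (a b : V) (C1 : G.Walk a a) (C2 : G.Walk b b),
    C1.IsCycle ∧ C2.IsCycle ∧ Odd C1.length ∧ Odd C2.length ∧
    ∀ x : V, x ∈ C1.support → x ∉ C2.support

/-- `G` is α-critical: deleting any edge increases the independence number. -/
def AlphaCritical (G : SimpleGraph V) : Prop :=
  ∀ e ∈ G.edgeSet, alphaNum (G.deleteEdges {e}) = alphaNum G + 1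

/-- The (open) neighborhood of a set of vertices. -/
def setN (G : SimpleGraph V) (I : Set V) : Set V := {x | x ∉ I ∧ ∃ y ∈ I, G.Adj x y}


/-! ### Auxiliary machinery for the main theorem -/

variable {G : SimpleGraph V}

theorem walk_edges_getVert {u v : V} (p : G.Walk u v) (e : Sym2 V) :
    e ∈ p.edges ↔ ∃ i, i < p.length ∧ e = s(p.getVert i, p.getVert (i+1)) := by
  induction p with
  | nil => simp
  | @cons a b c hadj q ih =>
    simp only [Walk.edges_cons, List.mem_cons, ih, Walk.length_cons]
    constructor
    · rintro (rfl | ⟨i, hi, rfl⟩)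
      · exact ⟨0, by simp⟩
      · exact ⟨i+1, by simpa using hi, by simp [Walk.getVert_cons_succ]⟩
    · rintro ⟨i, hi, rfl⟩
      match i with
      | 0 => left; simp [Walk.getVert_cons_succ]
      | (i+1) =>
        right
        exact ⟨i, by omega, by simp [Walk.getVert_cons_succ]⟩

theorem path_getVert_inj {u v : V} {p : G.Walk u v} (hp : p.IsPath) {i j : ℕ}
    (hi : i ≤ p.length) (hj : j ≤ p.length) (h : p.getVert i = p.getVert j) : i = j := by
  induction p generalizing i j with
  | nil => simp only [Walk.length_nil, Nat.le_zero] at hi hj; omega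
  | @cons a b c hadj q ih =>
    rw [Walk.cons_isPath_iff] at hp
    match i, j with
    | 0, 0 => rfl
    | 0, (j+1) =>
      exfalso
      apply hp.2
      rw [Walk.mem_support_iff_exists_getVert]
      simp only [Walk.getVert_zero, Walk.getVert_cons_succ] at h
      simp only [Walk.length_cons] at hj
      exact ⟨j, h.symm, by omega⟩
    | (i+1), 0 =>
      exfalso
      apply hp.2
      rw [Walk.mem_support_iff_exists_getVert]
      simp only [Walk.getVert_zero, Walk.getVert_cons_succ] at h
      simp only [Walk.length_cons] at hi
      exact ⟨i, h, by omega⟩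
    | (i+1), (j+1) =>
      simp only [Walk.length_cons] at hi hj
      simp only [Walk.getVert_cons_succ] at h
      have := ih hp.1 (by omega) (by omega) h
      omega

theorem cycle_getVert_inj {v : V} {p : G.Walk v v} (hp : p.IsCycle) {i j : ℕ}
    (hi : i < p.length) (hj : j < p.length) (h : p.getVert i = p.getVert j) : i = j := by
  match p with
  | Walk.nil => simp at hi
  | Walk.cons hadj q =>
    have hq : q.IsPath := (Walk.cons_isCycle_iff q hadj).mp hp |>.1
    simp only [Walk.length_cons] at hi hj
    match i, j with
    | 0, 0 => rfl
    | 0, (j+1) =>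
      exfalso
      simp only [Walk.getVert_zero, Walk.getVert_cons_succ] at h
      have : q.length = j := path_getVert_inj hq le_rfl (by omega) ((Walk.getVert_length q).trans h)
      omega
    | (i+1), 0 =>
      exfalso
      simp only [Walk.getVert_zero, Walk.getVert_cons_succ] at h
      have : i = q.length := path_getVert_inj hq (by omega) le_rfl (h.trans (Walk.getVert_length q).symm)
      omega
    | (i+1), (j+1) =>
      simp only [Walk.getVert_cons_succ] at h
      have := path_getVert_inj hq (by omega) (by omega) h
      omega

section Counting
variable [Fintype V]

lemma alpha_bddAbove (G : SimpleGraph V) :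
    BddAbove {n | ∃ s : Set V, IsIndep G s ∧ s.ncard = n} := by
  refine ⟨Nat.card V, ?_⟩
  rintro n ⟨s, -, rfl⟩
  rw [← Set.ncard_univ]
  exact Set.ncard_le_ncard (Set.subset_univ s) Set.finite_univ

lemma alpha_ge {G : SimpleGraph V} {s : Set V} (hs : IsIndep G s) : s.ncard ≤ alphaNum G :=
  le_csSup (alpha_bddAbove G) ⟨s, hs, rfl⟩

lemma alpha_witness (G : SimpleGraph V) : ∃ s : Set V, IsIndep G s ∧ s.ncard = alphaNum G := by
  refine Nat.sSup_mem ?_ (alpha_bddAbove G)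
  exact ⟨0, ∅, fun x hx => absurd hx (Set.notMem_empty x), by simp⟩

lemma match_bddAbove (G : SimpleGraph V) :
    BddAbove {n | ∃ M : G.Subgraph, M.IsMatching ∧ M.edgeSet.ncard = n} := by
  refine ⟨Nat.card (Sym2 V), ?_⟩
  rintro n ⟨M, -, rfl⟩
  rw [← Set.ncard_univ]
  exact Set.ncard_le_ncard (Set.subset_univ _) Set.finite_univ

lemma match_ge {G : SimpleGraph V} {M : G.Subgraph} (hm : M.IsMatching) :
    M.edgeSet.ncard ≤ matchNum G :=
  le_csSup (match_bddAbove G) ⟨M, hm, rfl⟩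

lemma match_witness (G : SimpleGraph V) :
    ∃ M : G.Subgraph, M.IsMatching ∧ M.edgeSet.ncard = matchNum G := by
  refine Nat.sSup_mem ?_ (match_bddAbove G)
  refine ⟨0, ⊥, ?_, by simp [Subgraph.edgeSet_bot]⟩
  intro x hx
  simp [Subgraph.verts_bot] at hx

lemma matching_edge_unique {G : SimpleGraph V} {M : G.Subgraph} (hm : M.IsMatching)
    {e1 e2 : Sym2 V} {z : V} (h1 : e1 ∈ M.edgeSet) (h2 : e2 ∈ M.edgeSet)
    (hz1 : z ∈ e1) (hz2 : z ∈ e2) : e1 = e2 := by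
  obtain ⟨y1, rfl⟩ := Sym2.mem_iff_exists.mp hz1
  obtain ⟨y2, rfl⟩ := Sym2.mem_iff_exists.mp hz2
  rw [Subgraph.mem_edgeSet] at h1 h2
  obtain ⟨w, -, hu⟩ := hm (M.edge_vert h1)
  rw [hu y1 h1, hu y2 h2]

lemma indep_matching_bound {G : SimpleGraph V} {s : Set V} {M : G.Subgraph}
    (hs : IsIndep G s) (hm : M.IsMatching) :
    s.ncard + M.edgeSet.ncard ≤ Nat.card V := by
  rcases M.edgeSet.eq_empty_or_nonempty with hE | hE
  · rw [hE, Set.ncard_empty, Nat.add_zero, ← Set.ncard_univ]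
    exact Set.ncard_le_ncard (Set.subset_univ s) Set.finite_univ
  have : Nonempty V := ⟨hE.choose.out.1⟩
  have key : ∀ e ∈ M.edgeSet, ∃ z, z ∈ e ∧ z ∉ s := by
    intro e he
    induction e with
    | _ x y =>
      rw [Subgraph.mem_edgeSet] at he
      by_cases hx : x ∈ s
      · refine ⟨y, by simp, fun hy => hs x hx y hy (M.adj_sub he)⟩
      · exact ⟨x, by simp, hx⟩
  choose! f hf1 hf2 using key
  have hle : M.edgeSet.ncard ≤ sᶜ.ncard := by
    refine Set.ncard_le_ncard_of_injOn f (fun e he => hf2 e he) ?_ (Set.toFinite _)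
    intro e1 h1 e2 h2 hf
    exact matching_edge_unique hm h1 h2 (hf1 e1 h1) (hf ▸ hf1 e2 h2)
  calc s.ncard + M.edgeSet.ncard ≤ s.ncard + sᶜ.ncard := by omega
    _ = Nat.card V := Set.ncard_add_ncard_compl s

lemma spanning_matching_card {G : SimpleGraph V} {M : G.Subgraph}
    (hm : M.IsMatching) (hsp : M.IsSpanning) :
    Nat.card V ≤ 2 * M.edgeSet.ncard := by
  classical
  have hout : ∀ e : Sym2 V, ∀ z, z ∈ e ↔ (z = e.out.1 ∨ z = e.out.2) := by
    intro e z
    have he : s(e.out.1, e.out.2) = e := e.out_eq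
    conv_lhs => rw [← he]
    exact Sym2.mem_iff
  set F : Finset (Sym2 V) := M.edgeSet.toFinset with hF
  have hsub : (Finset.univ : Finset V) ⊆ F.biUnion (fun e => {e.out.1, e.out.2}) := by
    intro z _
    obtain ⟨w, hw, -⟩ := hm (hsp z)
    refine Finset.mem_biUnion.mpr ⟨s(z, w), ?_, ?_⟩
    · rw [Set.mem_toFinset]; exact hw
    · have : z ∈ s(z, w) := by simp
      rw [hout] at this
      simpa using this
  calc Nat.card V = (Finset.univ : Finset V).card := by
        rw [Nat.card_eq_fintype_card, Finset.card_univ]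
    _ ≤ (F.biUnion (fun e => {e.out.1, e.out.2})).card := Finset.card_le_card hsub
    _ ≤ ∑ e ∈ F, ({e.out.1, e.out.2} : Finset V).card := Finset.card_biUnion_le
    _ ≤ ∑ _e ∈ F, 2 := Finset.sum_le_sum (fun e _ => Finset.card_insert_le _ _ |>.trans (by simp))
    _ = 2 * M.edgeSet.ncard := by
        rw [Finset.sum_const, smul_eq_mul, Set.ncard_eq_toFinset_card', mul_comm]

end Counting

lemma cycle_support_ncard {v : V} {C : G.Walk v v} (hC : C.IsCycle) :
    {x | x ∈ C.support}.ncard = C.length := by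
  have h0 : 0 < C.length := by
    have := hC.three_le_length
    omega
  have himg : {x | x ∈ C.support} = C.getVert '' ↑(Finset.range C.length) := by
    ext z
    simp only [Set.mem_setOf_eq, Walk.mem_support_iff_exists_getVert, Set.mem_image,
      Finset.coe_range, Set.mem_Iio]
    constructor
    · rintro ⟨n, rfl, hn⟩
      rcases eq_or_lt_of_le hn with rfl | hlt
      · exact ⟨0, h0, by rw [Walk.getVert_length, Walk.getVert_zero]⟩
      · exact ⟨n, hlt, rfl⟩
    · rintro ⟨n, hn, rfl⟩
      exact ⟨n, rfl, le_of_lt hn⟩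
  rw [himg, Set.ncard_image_of_injOn, Set.ncard_coe_finset, Finset.card_range]
  intro i hi j hj hij
  simp only [Finset.coe_range, Set.mem_Iio] at hi hj
  exact cycle_getVert_inj hC hi hj hij

lemma tip_not_matched_in_cycle [Fintype V] {K : SimpleGraph V} {v : V} {C : K.Walk v v}
    (hC : C.IsCycle) (hodd : Odd C.length) {M : K.Subgraph}
    (f : V → V) (hf : ∀ x, M.Adj x (f x)) (hfu : ∀ x y, M.Adj x y → y = f x)
    (hclosed : ∀ x y, K.Adj x y → x ∈ C.support → x ≠ v → y ∈ C.support) :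
    f v ∉ C.support := by
  intro hfv
  classical
  set A : Set V := {x | x ∈ C.support} with hA
  have hmemA : ∀ x ∈ A, f x ∈ A := by
    intro x hx
    by_cases hxv : x = v
    · subst hxv; exact hfv
    · exact hclosed x (f x) (M.adj_sub (hf x)) hx hxv
  set M₁ : K.Subgraph :=
    { verts := A
      Adj := fun x y => M.Adj x y ∧ x ∈ A ∧ y ∈ A
      adj_sub := fun h => M.adj_sub h.1
      edge_vert := fun h => h.2.1
      symm := ⟨fun x y h => ⟨h.1.symm, h.2.2, h.2.1⟩⟩ } with hM₁
  have hmatch : M₁.IsMatching := by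
    intro x hx
    refine ⟨f x, ⟨hf x, hx, hmemA x hx⟩, ?_⟩
    intro y hy
    exact hfu x y hy.1
  haveI : Fintype ↥(M₁.verts) := (Set.toFinite A).fintype
  have heven := hmatch.even_card
  have hcard : M₁.verts.toFinset.card = C.length := by
    rw [← Set.ncard_eq_toFinset_card']
    exact cycle_support_ncard hC
  rw [hcard] at heven
  obtain ⟨a, ha⟩ := hodd
  obtain ⟨r, hr⟩ := heven
  omega

section Main
variable [Fintype V]

set_option maxHeartbeats 1000000 in
lemma aux_main (K : SimpleGraph V) (v w : V) (C1 : K.Walk v v) (C2 : K.Walk w w)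
    (P : K.Walk v w) (hC1 : C1.IsCycle) (hC2 : C2.IsCycle) (hoC1 : Odd C1.length)
    (hoC2 : Odd C2.length) (hP : P.IsPath) (hoP : Odd P.length)
    (hd12 : ∀ x, x ∈ C1.support → x ∉ C2.support)
    (hPC1 : ∀ x, x ∈ P.support → x ∈ C1.support → x = v)
    (hPC2 : ∀ x, x ∈ P.support → x ∈ C2.support → x = w)
    (hcov : ∀ x, x ∈ C1.support ∨ x ∈ C2.support ∨ x ∈ P.support)
    (hedge : ∀ e, e ∈ K.edgeSet ↔ e ∈ C1.edges ∨ e ∈ C2.edges ∨ e ∈ P.edges)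
    (M : K.Subgraph) (hM : M.IsPerfectMatching)
    (e : Sym2 V) (heM : e ∉ M.edgeSet)
    (hloc : e ∈ C1.edges ∨ e ∈ P.edges) :
    IsKE (K.deleteEdges {e}) := by
  classical
  obtain ⟨a, ha⟩ := hoC1
  obtain ⟨b, hb⟩ := hoC2
  obtain ⟨c, hc⟩ := hoP
  have ha1 : 1 ≤ a := by have := hC1.three_le_length; omega
  have hb1 : 1 ≤ b := by have := hC2.three_le_length; omega
  -- injectivity
  have injC1 : ∀ {i j : ℕ}, i < C1.length → j < C1.length →
      C1.getVert i = C1.getVert j → i = j := fun hi hj => cycle_getVert_inj hC1 hi hj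
  have injC2 : ∀ {i j : ℕ}, i < C2.length → j < C2.length →
      C2.getVert i = C2.getVert j → i = j := fun hi hj => cycle_getVert_inj hC2 hi hj
  have injP : ∀ {i j : ℕ}, i ≤ P.length → j ≤ P.length →
      P.getVert i = P.getVert j → i = j := fun hi hj => path_getVert_inj hP hi hj
  have memC1 : ∀ i, i ≤ C1.length → C1.getVert i ∈ C1.support := fun i hi =>
    Walk.mem_support_iff_exists_getVert.mpr ⟨i, rfl, hi⟩
  have memC2 : ∀ i, i ≤ C2.length → C2.getVert i ∈ C2.support := fun i hi =>
    Walk.mem_support_iff_exists_getVert.mpr ⟨i, rfl, hi⟩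
  have memP : ∀ i, i ≤ P.length → P.getVert i ∈ P.support := fun i hi =>
    Walk.mem_support_iff_exists_getVert.mpr ⟨i, rfl, hi⟩
  have hvC1 : v ∈ C1.support := C1.start_mem_support
  have hwC2 : w ∈ C2.support := C2.start_mem_support
  -- neighbor closure
  have F1 : ∀ x y, K.Adj x y → x ∈ C1.support → x ≠ v → s(x, y) ∈ C1.edges := by
    intro x y hxy hx hxv
    rcases (hedge s(x, y)).mp (K.mem_edgeSet.mpr hxy) with h' | h' | h'
    · exact h'
    · exact absurd (Walk.fst_mem_support_of_mem_edges C2 h') (hd12 x hx)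
    · exact absurd (hPC1 x (Walk.fst_mem_support_of_mem_edges P h') hx) hxv
  have F2 : ∀ x y, K.Adj x y → x ∈ C2.support → x ≠ w → s(x, y) ∈ C2.edges := by
    intro x y hxy hx hxw
    rcases (hedge s(x, y)).mp (K.mem_edgeSet.mpr hxy) with h' | h' | h'
    · exact absurd hx (hd12 _ (Walk.fst_mem_support_of_mem_edges C1 h'))
    · exact h'
    · exact absurd (hPC2 x (Walk.fst_mem_support_of_mem_edges P h') hx) hxw
  have F3 : ∀ x y, K.Adj x y → x ∈ P.support → x ≠ v → x ≠ w → s(x, y) ∈ P.edges := by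
    intro x y hxy hx hxv hxw
    rcases (hedge s(x, y)).mp (K.mem_edgeSet.mpr hxy) with h' | h' | h'
    · exact absurd (hPC1 x hx (Walk.fst_mem_support_of_mem_edges C1 h')) hxv
    · exact absurd (hPC2 x hx (Walk.fst_mem_support_of_mem_edges C2 h')) hxw
    · exact h'
  -- consecutive lemmas
  have conC1 : ∀ j y, 1 ≤ j → j ≤ C1.length - 1 → s(C1.getVert j, y) ∈ C1.edges →
      y = C1.getVert (j - 1) ∨ y = C1.getVert (j + 1) := by
    intro j y hj1 hj2 hedges
    obtain ⟨i, hi, hEq⟩ := (walk_edges_getVert C1 _).mp hedges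
    rcases Sym2.eq_iff.mp hEq with ⟨h1, h2⟩ | ⟨h1, h2⟩
    · have hij : j = i := injC1 (by omega) hi h1
      right; rw [hij]; exact h2
    · by_cases hia : i + 1 < C1.length
      · have hij : j = i + 1 := injC1 (by omega) hia h1
        left; rw [hij, Nat.add_sub_cancel]; exact h2
      · exfalso
        have hil : i + 1 = C1.length := by omega
        rw [hil, Walk.getVert_length] at h1
        have : (0 : ℕ) = j := injC1 (by omega) (by omega)
          ((Walk.getVert_zero C1).trans h1.symm)
        omega
  have conC2 : ∀ j y, 1 ≤ j → j ≤ C2.length - 1 → s(C2.getVert j, y) ∈ C2.edges →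
      y = C2.getVert (j - 1) ∨ y = C2.getVert (j + 1) := by
    intro j y hj1 hj2 hedges
    obtain ⟨i, hi, hEq⟩ := (walk_edges_getVert C2 _).mp hedges
    rcases Sym2.eq_iff.mp hEq with ⟨h1, h2⟩ | ⟨h1, h2⟩
    · have hij : j = i := injC2 (by omega) hi h1
      right; rw [hij]; exact h2
    · by_cases hia : i + 1 < C2.length
      · have hij : j = i + 1 := injC2 (by omega) hia h1
        left; rw [hij, Nat.add_sub_cancel]; exact h2
      · exfalso
        have hil : i + 1 = C2.length := by omega
        rw [hil, Walk.getVert_length] at h1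
        have : (0 : ℕ) = j := injC2 (by omega) (by omega)
          ((Walk.getVert_zero C2).trans h1.symm)
        omega
  have conP : ∀ j y, j ≤ P.length → s(P.getVert j, y) ∈ P.edges →
      (1 ≤ j ∧ y = P.getVert (j - 1)) ∨ (j + 1 ≤ P.length ∧ y = P.getVert (j + 1)) := by
    intro j y hj hedges
    obtain ⟨i, hi, hEq⟩ := (walk_edges_getVert P _).mp hedges
    rcases Sym2.eq_iff.mp hEq with ⟨h1, h2⟩ | ⟨h1, h2⟩
    · right
      have hij : j = i := injP hj (by omega) h1
      exact ⟨by omega, by rw [hij]; exact h2⟩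
    · left
      have hij : j = i + 1 := injP hj (by omega) h1
      exact ⟨by omega, by rw [hij, Nat.add_sub_cancel]; exact h2⟩
  -- the matching partner function
  have hMf : ∀ x, ∃! y, M.Adj x y := Subgraph.isPerfectMatching_iff.mp hM
  choose f hf hfu using hMf
  have finv : ∀ x, f (f x) = x := fun x => (hfu (f x) x (hf x).symm).symm
  have fne : ∀ x y, f x = y → f y = x := by intro x y hxy; rw [← hxy, finv]
  have tip1 : f v ∉ C1.support := by
    refine tip_not_matched_in_cycle hC1 ⟨a, ha⟩ f hf hfu ?_
    intro x y hxy hx hxv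
    exact Walk.snd_mem_support_of_mem_edges C1 (F1 x y hxy hx hxv)
  have tip2 : f w ∉ C2.support := by
    refine tip_not_matched_in_cycle hC2 ⟨b, hb⟩ f hf hfu ?_
    intro x y hxy hx hxw
    exact Walk.snd_mem_support_of_mem_edges C2 (F2 x y hxy hx hxw)
  -- v is matched along P
  have fv : f v = P.getVert 1 := by
    have hKv : K.Adj v (f v) := M.adj_sub (hf v)
    rcases (hedge s(v, f v)).mp (K.mem_edgeSet.mpr hKv) with h' | h' | h'
    · exact absurd (Walk.snd_mem_support_of_mem_edges C1 h') tip1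
    · exact absurd (Walk.fst_mem_support_of_mem_edges C2 h') (hd12 v hvC1)
    · rcases conP 0 (f v) (by omega) (by rw [Walk.getVert_zero]; exact h') with ⟨h0, -⟩ | ⟨-, h1⟩
      · omega
      · exact h1
  have chainP : ∀ t, 2 * t ≤ P.length - 1 → f (P.getVert (2 * t)) = P.getVert (2 * t + 1) := by
    intro t
    induction t with
    | zero => intro _; simpa using fv
    | succ t ih =>
      intro hle
      have ihe := ih (by omega)
      have hjv : P.getVert (2 * (t + 1)) ≠ v := by
        intro hveq
        have : 2 * (t + 1) = 0 := injP (by omega) (by omega)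
          (by rw [hveq, Walk.getVert_zero])
        omega
      have hjw : P.getVert (2 * (t + 1)) ≠ w := by
        intro hweq
        have : 2 * (t + 1) = P.length := injP (by omega) le_rfl
          (by rw [hweq, Walk.getVert_length])
        omega
      have hKj : K.Adj (P.getVert (2 * (t + 1))) (f (P.getVert (2 * (t + 1)))) :=
        M.adj_sub (hf _)
      have hedgesP := F3 _ _ hKj (memP _ (by omega)) hjv hjw
      rcases conP (2 * (t + 1)) _ (by omega) hedgesP with ⟨-, hprev⟩ | ⟨-, hnext⟩
      · exfalso
        have hfprev : f (P.getVert (2 * t + 1)) = P.getVert (2 * t) := fne _ _ ihe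
        have h2 : f (P.getVert (2 * (t + 1))) = P.getVert (2 * t + 1) := by
          rw [hprev]
          congr 1
          all_goals omega
        have h3 : P.getVert (2 * (t + 1)) = f (P.getVert (2 * t + 1)) := by
          rw [← h2, finv]
        rw [hfprev] at h3
        have : 2 * (t + 1) = 2 * t := injP (by omega) (by omega) h3
        omega
      · rw [hnext]
  have chainC1 : ∀ t, 2 * t + 2 ≤ C1.length - 1 →
      f (C1.getVert (2 * t + 1)) = C1.getVert (2 * t + 2) := by
    intro t
    induction t with
    | zero =>
      intro hle
      have h1v : C1.getVert 1 ≠ v := by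
        intro hveq
        have : (1 : ℕ) = 0 := injC1 (by omega) (by omega) (by rw [hveq, Walk.getVert_zero])
        omega
      have hK1 : K.Adj (C1.getVert 1) (f (C1.getVert 1)) := M.adj_sub (hf _)
      have hedges1 := F1 _ _ hK1 (memC1 1 (by omega)) h1v
      rcases conC1 1 _ (by omega) (by omega) hedges1 with hprev | hnext
      · exfalso
        have hfv1 : f (C1.getVert 1) = v := by
          rw [hprev]; norm_num
        exact tip1 (by rw [fne _ _ hfv1]; exact memC1 1 (by omega))
      · simpa using hnext
    | succ t ih =>
      intro hle
      have ihe := ih (by omega)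
      have hjv : C1.getVert (2 * (t + 1) + 1) ≠ v := by
        intro hveq
        have : 2 * (t + 1) + 1 = 0 := injC1 (by omega) (by omega)
          (by rw [hveq, Walk.getVert_zero])
        omega
      have hKj : K.Adj (C1.getVert (2 * (t + 1) + 1)) (f (C1.getVert (2 * (t + 1) + 1))) :=
        M.adj_sub (hf _)
      have hedgesj := F1 _ _ hKj (memC1 _ (by omega)) hjv
      rcases conC1 (2 * (t + 1) + 1) _ (by omega) (by omega) hedgesj with hprev | hnext
      · exfalso
        have hfprev : f (C1.getVert (2 * t + 2)) = C1.getVert (2 * t + 1) := fne _ _ ihe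
        have h2 : f (C1.getVert (2 * (t + 1) + 1)) = C1.getVert (2 * t + 2) := by
          rw [hprev]
          congr 1
          all_goals omega
        have h3 : C1.getVert (2 * (t + 1) + 1) = f (C1.getVert (2 * t + 2)) := by
          rw [← h2, finv]
        rw [hfprev] at h3
        have : 2 * (t + 1) + 1 = 2 * t + 1 := injC1 (by omega) (by omega) h3
        omega
      · rw [hnext]
  have chainC2 : ∀ t, 2 * t + 2 ≤ C2.length - 1 →
      f (C2.getVert (2 * t + 1)) = C2.getVert (2 * t + 2) := by
    intro t
    induction t with
    | zero =>
      intro hle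
      have h1w : C2.getVert 1 ≠ w := by
        intro hweq
        have : (1 : ℕ) = 0 := injC2 (by omega) (by omega) (by rw [hweq, Walk.getVert_zero])
        omega
      have hK1 : K.Adj (C2.getVert 1) (f (C2.getVert 1)) := M.adj_sub (hf _)
      have hedges1 := F2 _ _ hK1 (memC2 1 (by omega)) h1w
      rcases conC2 1 _ (by omega) (by omega) hedges1 with hprev | hnext
      · exfalso
        have hfw1 : f (C2.getVert 1) = w := by
          rw [hprev]; norm_num
        exact tip2 (by rw [fne _ _ hfw1]; exact memC2 1 (by omega))
      · simpa using hnext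
    | succ t ih =>
      intro hle
      have ihe := ih (by omega)
      have hjw : C2.getVert (2 * (t + 1) + 1) ≠ w := by
        intro hweq
        have : 2 * (t + 1) + 1 = 0 := injC2 (by omega) (by omega)
          (by rw [hweq, Walk.getVert_zero])
        omega
      have hKj : K.Adj (C2.getVert (2 * (t + 1) + 1)) (f (C2.getVert (2 * (t + 1) + 1))) :=
        M.adj_sub (hf _)
      have hedgesj := F2 _ _ hKj (memC2 _ (by omega)) hjw
      rcases conC2 (2 * (t + 1) + 1) _ (by omega) (by omega) hedgesj with hprev | hnext
      · exfalso
        have hfprev : f (C2.getVert (2 * t + 2)) = C2.getVert (2 * t + 1) := fne _ _ ihe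
        have h2 : f (C2.getVert (2 * (t + 1) + 1)) = C2.getVert (2 * t + 2) := by
          rw [hprev]
          congr 1
          all_goals omega
        have h3 : C2.getVert (2 * (t + 1) + 1) = f (C2.getVert (2 * t + 2)) := by
          rw [← h2, finv]
        rw [hfprev] at h3
        have : 2 * (t + 1) + 1 = 2 * t + 1 := injC2 (by omega) (by omega) h3
        omega
      · rw [hnext]
  -- parity of the position of e
  have locC1 : ∀ j, j < C1.length → e = s(C1.getVert j, C1.getVert (j + 1)) → Even j := by
    intro j hj hej
    rcases Nat.even_or_odd j with hev | hod
    · exact hev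
    exfalso
    obtain ⟨t, ht⟩ := hod
    apply heM
    have hft : f (C1.getVert j) = C1.getVert (j + 1) := by
      have h2 := chainC1 t (by omega)
      rw [show 2 * t + 1 = j from by omega, show 2 * t + 2 = j + 1 from by omega] at h2
      exact h2
    rw [hej, Subgraph.mem_edgeSet, ← hft]
    exact hf _
  have locP : ∀ j, j < P.length → e = s(P.getVert j, P.getVert (j + 1)) → Odd j := by
    intro j hj hej
    rcases Nat.even_or_odd j with hev | hod
    swap
    · exact hod
    exfalso
    obtain ⟨t, ht⟩ := hev
    apply heM
    have hft : f (P.getVert j) = P.getVert (j + 1) := by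
      have h2 := chainP t (by omega)
      rw [show 2 * t = j from by omega] at h2
      exact h2
    rw [hej, Subgraph.mem_edgeSet, ← hft]
    exact hf _
  -- vertex count
  have hinj1 : Set.InjOn C1.getVert ↑(Finset.range C1.length) := by
    intro i hi j hj hij
    simp only [Finset.coe_range, Set.mem_Iio] at hi hj
    exact injC1 hi hj hij
  have hinj2 : Set.InjOn C2.getVert ↑(Finset.range C2.length) := by
    intro i hi j hj hij
    simp only [Finset.coe_range, Set.mem_Iio] at hi hj
    exact injC2 hi hj hij
  have hinj3 : Set.InjOn P.getVert ↑(Finset.Icc 1 (P.length - 1)) := by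
    intro i hi j hj hij
    simp only [Finset.coe_Icc, Set.mem_Icc] at hi hj
    exact injP (by omega) (by omega) hij
  have hmemF1 : ∀ z ∈ (Finset.range C1.length).image C1.getVert, z ∈ C1.support := by
    intro z hz
    obtain ⟨n, hn, rfl⟩ := Finset.mem_image.mp hz
    exact memC1 n (by simp at hn; omega)
  have hmemF2 : ∀ z ∈ (Finset.range C2.length).image C2.getVert, z ∈ C2.support := by
    intro z hz
    obtain ⟨n, hn, rfl⟩ := Finset.mem_image.mp hz
    exact memC2 n (by simp at hn; omega)
  have hcount : Nat.card V = 2 * (a + b + c + 1) := by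
    have huniv : (Finset.univ : Finset V) =
        ((Finset.range C1.length).image C1.getVert ∪
         (Finset.range C2.length).image C2.getVert) ∪
         (Finset.Icc 1 (P.length - 1)).image P.getVert := by
      apply Finset.Subset.antisymm
      · intro z _
        simp only [Finset.mem_union, Finset.mem_image, Finset.mem_range, Finset.mem_Icc]
        rcases hcov z with hz | hz | hz
        · obtain ⟨n, rfl, hn⟩ := Walk.mem_support_iff_exists_getVert.mp hz
          rcases eq_or_lt_of_le hn with rfl | hlt
          · exact Or.inl (Or.inl ⟨0, by omega, by rw [Walk.getVert_length, Walk.getVert_zero]⟩)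
          · exact Or.inl (Or.inl ⟨n, hlt, rfl⟩)
        · obtain ⟨n, rfl, hn⟩ := Walk.mem_support_iff_exists_getVert.mp hz
          rcases eq_or_lt_of_le hn with rfl | hlt
          · exact Or.inl (Or.inr ⟨0, by omega, by rw [Walk.getVert_length, Walk.getVert_zero]⟩)
          · exact Or.inl (Or.inr ⟨n, hlt, rfl⟩)
        · obtain ⟨n, rfl, hn⟩ := Walk.mem_support_iff_exists_getVert.mp hz
          rcases Nat.eq_or_lt_of_le hn with rfl | hlt
          · exact Or.inl (Or.inr ⟨0, by omega, by rw [Walk.getVert_length, Walk.getVert_zero]⟩)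
          · match n, hlt with
            | 0, _ =>
              exact Or.inl (Or.inl ⟨0, by omega, by rw [Walk.getVert_zero, Walk.getVert_zero]⟩)
            | (n+1), hlt => exact Or.inr ⟨n + 1, ⟨by omega, by omega⟩, rfl⟩
      · intro z _
        exact Finset.mem_univ z
    have hd12' : Disjoint ((Finset.range C1.length).image C1.getVert)
        ((Finset.range C2.length).image C2.getVert) := by
      rw [Finset.disjoint_left]
      intro z hz1 hz2
      exact hd12 z (hmemF1 z hz1) (hmemF2 z hz2)
    have hd3 : Disjoint ((Finset.range C1.length).image C1.getVert ∪
        (Finset.range C2.length).image C2.getVert)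
        ((Finset.Icc 1 (P.length - 1)).image P.getVert) := by
      rw [Finset.disjoint_left]
      intro z hz1 hz3
      obtain ⟨n, hn, rfl⟩ := Finset.mem_image.mp hz3
      simp only [Finset.mem_Icc] at hn
      have hzP : P.getVert n ∈ P.support := memP n (by omega)
      have hznv : P.getVert n ≠ v := by
        intro hveq
        have : n = 0 := injP (by omega) (by omega) (by rw [hveq, Walk.getVert_zero])
        omega
      have hznw : P.getVert n ≠ w := by
        intro hweq
        have : n = P.length := injP (by omega) le_rfl (by rw [hweq, Walk.getVert_length])
        omega
      rcases Finset.mem_union.mp hz1 with hz | hz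
      · exact hznv (hPC1 _ hzP (hmemF1 _ hz))
      · exact hznw (hPC2 _ hzP (hmemF2 _ hz))
    have hcard1 : ((Finset.range C1.length).image C1.getVert).card = C1.length :=
      (Finset.card_image_of_injOn hinj1).trans (Finset.card_range _)
    have hcard2 : ((Finset.range C2.length).image C2.getVert).card = C2.length :=
      (Finset.card_image_of_injOn hinj2).trans (Finset.card_range _)
    have hcard3 : ((Finset.Icc 1 (P.length - 1)).image P.getVert).card = P.length - 1 := by
      rw [Finset.card_image_of_injOn hinj3, Nat.card_Icc]
      omega
    have : Nat.card V = (Finset.univ : Finset V).card := by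
      rw [Nat.card_eq_fintype_card, Finset.card_univ]
    rw [this, huniv, Finset.card_union_of_disjoint hd3, Finset.card_union_of_disjoint hd12',
      hcard1, hcard2, hcard3]
    omega
  -- the matching survives in K - e
  have hν : a + b + c + 1 ≤ matchNum (K.deleteEdges {e}) := by
    set M' : (K.deleteEdges {e}).Subgraph :=
      { verts := M.verts
        Adj := M.Adj
        adj_sub := by
          intro x y hxy
          rw [SimpleGraph.deleteEdges_adj]
          refine ⟨M.adj_sub hxy, ?_⟩
          intro hmem
          rw [Set.mem_singleton_iff] at hmem
          exact heM (hmem ▸ (Subgraph.mem_edgeSet.mpr hxy))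
        edge_vert := fun hxy => M.edge_vert hxy
        symm := M.symm } with hM'def
    have hM'match : M'.IsMatching := fun x hx => hM.1 hx
    have hM'span : M'.IsSpanning := hM.2
    have hbound := spanning_matching_card hM'match hM'span
    have hge := match_ge hM'match
    omega
  -- the final assembly
  have conclude : ∀ S : Finset V, IsIndep (K.deleteEdges {e}) ↑S → S.card = a + b + c + 1 →
      IsKE (K.deleteEdges {e}) := by
    intro S hind hScard
    obtain ⟨s, hs, hsα⟩ := alpha_witness (K.deleteEdges {e})
    obtain ⟨M'', hm'', hmν⟩ := match_witness (K.deleteEdges {e})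
    have h1 := indep_matching_bound hs hm''
    have h2 : (↑S : Set V).ncard ≤ alphaNum (K.deleteEdges {e}) := alpha_ge hind
    rw [Set.ncard_coe_finset, hScard] at h2
    rw [hsα, hmν] at h1
    unfold IsKE
    omega
  -- generic edge-position lemmas
  have edgeC1 : ∀ m1 m2 : ℕ, m1 ≤ C1.length - 1 → m2 ≤ C1.length - 1 →
      s(C1.getVert m1, C1.getVert m2) ∈ C1.edges →
      ∃ k, k < C1.length ∧
        s(C1.getVert m1, C1.getVert m2) = s(C1.getVert k, C1.getVert (k + 1)) ∧
        ((m1 = k ∧ (m2 = k + 1 ∨ (k + 1 = C1.length ∧ m2 = 0))) ∨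
         (m2 = k ∧ (m1 = k + 1 ∨ (k + 1 = C1.length ∧ m1 = 0)))) := by
    intro m1 m2 h1 h2 hmem
    obtain ⟨k, hk, hEq⟩ := (walk_edges_getVert C1 _).mp hmem
    refine ⟨k, hk, hEq, ?_⟩
    rcases Sym2.eq_iff.mp hEq with ⟨ha', hb'⟩ | ⟨ha', hb'⟩
    · left
      refine ⟨injC1 (by omega) hk ha', ?_⟩
      by_cases hkl : k + 1 < C1.length
      · left; exact injC1 (by omega) hkl hb'
      · right
        have hkeq : k + 1 = C1.length := by omega
        have hzero : C1.getVert m2 = C1.getVert 0 := by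
          rw [hb', hkeq, Walk.getVert_length, Walk.getVert_zero]
        exact ⟨hkeq, injC1 (by omega) (by omega) hzero⟩
    · right
      refine ⟨injC1 (by omega) hk hb', ?_⟩
      by_cases hkl : k + 1 < C1.length
      · left; exact injC1 (by omega) hkl ha'
      · right
        have hkeq : k + 1 = C1.length := by omega
        have hzero : C1.getVert m1 = C1.getVert 0 := by
          rw [ha', hkeq, Walk.getVert_length, Walk.getVert_zero]
        exact ⟨hkeq, injC1 (by omega) (by omega) hzero⟩
  have edgeC2 : ∀ m1 m2 : ℕ, m1 ≤ C2.length - 1 → m2 ≤ C2.length - 1 →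
      s(C2.getVert m1, C2.getVert m2) ∈ C2.edges →
      ∃ k, k < C2.length ∧
        s(C2.getVert m1, C2.getVert m2) = s(C2.getVert k, C2.getVert (k + 1)) ∧
        ((m1 = k ∧ (m2 = k + 1 ∨ (k + 1 = C2.length ∧ m2 = 0))) ∨
         (m2 = k ∧ (m1 = k + 1 ∨ (k + 1 = C2.length ∧ m1 = 0)))) := by
    intro m1 m2 h1 h2 hmem
    obtain ⟨k, hk, hEq⟩ := (walk_edges_getVert C2 _).mp hmem
    refine ⟨k, hk, hEq, ?_⟩
    rcases Sym2.eq_iff.mp hEq with ⟨ha', hb'⟩ | ⟨ha', hb'⟩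
    · left
      refine ⟨injC2 (by omega) hk ha', ?_⟩
      by_cases hkl : k + 1 < C2.length
      · left; exact injC2 (by omega) hkl hb'
      · right
        have hkeq : k + 1 = C2.length := by omega
        have hzero : C2.getVert m2 = C2.getVert 0 := by
          rw [hb', hkeq, Walk.getVert_length, Walk.getVert_zero]
        exact ⟨hkeq, injC2 (by omega) (by omega) hzero⟩
    · right
      refine ⟨injC2 (by omega) hk hb', ?_⟩
      by_cases hkl : k + 1 < C2.length
      · left; exact injC2 (by omega) hkl ha'
      · right
        have hkeq : k + 1 = C2.length := by omega
        have hzero : C2.getVert m1 = C2.getVert 0 := by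
          rw [ha', hkeq, Walk.getVert_length, Walk.getVert_zero]
        exact ⟨hkeq, injC2 (by omega) (by omega) hzero⟩
  have edgeP : ∀ m1 m2 : ℕ, m1 ≤ P.length → m2 ≤ P.length →
      s(P.getVert m1, P.getVert m2) ∈ P.edges →
      ∃ k, k < P.length ∧
        s(P.getVert m1, P.getVert m2) = s(P.getVert k, P.getVert (k + 1)) ∧
        ((m1 = k ∧ m2 = k + 1) ∨ (m2 = k ∧ m1 = k + 1)) := by
    intro m1 m2 h1 h2 hmem
    obtain ⟨k, hk, hEq⟩ := (walk_edges_getVert P _).mp hmem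
    refine ⟨k, hk, hEq, ?_⟩
    rcases Sym2.eq_iff.mp hEq with ⟨ha', hb'⟩ | ⟨ha', hb'⟩
    · exact Or.inl ⟨injP (by omega) (by omega) ha', injP (by omega) (by omega) hb'⟩
    · exact Or.inr ⟨injP (by omega) (by omega) hb', injP (by omega) (by omega) ha'⟩
  rcases hloc with heC1 | heP
  · -- Case 1 : e lies on C1
    obtain ⟨j, hj, hej⟩ := (walk_edges_getVert C1 e).mp heC1
    obtain ⟨i, hji⟩ := locC1 j hj hej
    have hia : i ≤ a := by omega
    set A1 : Finset V := (Finset.Icc 1 i).image (fun t => C1.getVert (2 * t)) with hA1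
    set A2 : Finset V := (Finset.Icc i (a - 1)).image (fun t => C1.getVert (2 * t + 1)) with hA2
    set A3 : Finset V := (Finset.Icc 0 c).image (fun t => P.getVert (2 * t)) with hA3
    set A4 : Finset V := (Finset.Icc 0 (b - 1)).image (fun t => C2.getVert (2 * t + 1)) with hA4
    set S : Finset V := ((A1 ∪ A2) ∪ A3) ∪ A4 with hS
    have repC1 : ∀ z ∈ S, z ∈ C1.support → ∃ m, m ≤ C1.length - 1 ∧
        (m = 0 ∨ (2 ≤ m ∧ m ≤ 2 * i ∧ m % 2 = 0) ∨
          (2 * i + 1 ≤ m ∧ m ≤ 2 * a - 1 ∧ m % 2 = 1)) ∧ z = C1.getVert m := by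
      intro z hz hzC1
      simp only [hS, hA1, hA2, hA3, hA4, Finset.mem_union, Finset.mem_image,
        Finset.mem_Icc] at hz
      rcases hz with ((⟨t, ht, rfl⟩ | ⟨t, ht, rfl⟩) | ⟨t, ht, rfl⟩) | ⟨t, ht, rfl⟩
      · exact ⟨2 * t, by omega, by omega, rfl⟩
      · exact ⟨2 * t + 1, by omega, by omega, rfl⟩
      · have hzP : P.getVert (2 * t) ∈ P.support := memP _ (by omega)
        have : P.getVert (2 * t) = v := hPC1 _ hzP hzC1
        exact ⟨0, by omega, by omega, by rw [this, Walk.getVert_zero]⟩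
      · exact absurd hzC1 (fun hc => hd12 _ hc (memC2 _ (by omega)))
    have repP : ∀ z ∈ S, z ∈ P.support → ∃ m, m % 2 = 0 ∧ m ≤ 2 * c ∧ z = P.getVert m := by
      intro z hz hzP
      simp only [hS, hA1, hA2, hA3, hA4, Finset.mem_union, Finset.mem_image,
        Finset.mem_Icc] at hz
      rcases hz with ((⟨t, ht, rfl⟩ | ⟨t, ht, rfl⟩) | ⟨t, ht, rfl⟩) | ⟨t, ht, rfl⟩
      · exfalso
        have : C1.getVert (2 * t) = v := hPC1 _ hzP (memC1 _ (by omega))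
        have h0 : C1.getVert (2 * t) = C1.getVert 0 := by rw [this, Walk.getVert_zero]
        have := injC1 (by omega) (by omega) h0
        omega
      · exfalso
        have : C1.getVert (2 * t + 1) = v := hPC1 _ hzP (memC1 _ (by omega))
        have h0 : C1.getVert (2 * t + 1) = C1.getVert 0 := by rw [this, Walk.getVert_zero]
        have := injC1 (by omega) (by omega) h0
        omega
      · exact ⟨2 * t, by omega, by omega, rfl⟩
      · exfalso
        have : C2.getVert (2 * t + 1) = w := hPC2 _ hzP (memC2 _ (by omega))
        have h0 : C2.getVert (2 * t + 1) = C2.getVert 0 := by rw [this, Walk.getVert_zero]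
        have := injC2 (by omega) (by omega) h0
        omega
    have repC2 : ∀ z ∈ S, z ∈ C2.support →
        ∃ m, m % 2 = 1 ∧ m ≤ 2 * b - 1 ∧ z = C2.getVert m := by
      intro z hz hzC2
      simp only [hS, hA1, hA2, hA3, hA4, Finset.mem_union, Finset.mem_image,
        Finset.mem_Icc] at hz
      rcases hz with ((⟨t, ht, rfl⟩ | ⟨t, ht, rfl⟩) | ⟨t, ht, rfl⟩) | ⟨t, ht, rfl⟩
      · exact absurd hzC2 (hd12 _ (memC1 _ (by omega)))
      · exact absurd hzC2 (hd12 _ (memC1 _ (by omega)))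
      · exfalso
        have : P.getVert (2 * t) = w := hPC2 _ (memP _ (by omega)) hzC2
        have h0 : P.getVert (2 * t) = P.getVert P.length := by rw [this, Walk.getVert_length]
        have := injP (by omega) le_rfl h0
        omega
      · exact ⟨2 * t + 1, by omega, by omega, rfl⟩
    have hindep : IsIndep (K.deleteEdges {e}) ↑S := by
      intro x hx y hy hadj
      rw [SimpleGraph.deleteEdges_adj] at hadj
      obtain ⟨hK, hne⟩ := hadj
      rw [Set.mem_singleton_iff] at hne
      rw [Finset.mem_coe] at hx hy
      rcases (hedge s(x, y)).mp (K.mem_edgeSet.mpr hK) with hE | hE | hE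
      · obtain ⟨mx, hmxb, hmx, hxm⟩ := repC1 x hx (Walk.fst_mem_support_of_mem_edges C1 hE)
        obtain ⟨my, hmyb, hmy, hym⟩ := repC1 y hy (Walk.snd_mem_support_of_mem_edges C1 hE)
        subst hxm hym
        obtain ⟨k, hk, hkEq, hrel⟩ := edgeC1 mx my hmxb hmyb hE
        by_cases hkj : k = j
        · exact hne (by rw [hkEq, hkj, ← hej])
        · omega
      · obtain ⟨mx, hmxb, hmx, hxm⟩ := repC2 x hx (Walk.fst_mem_support_of_mem_edges C2 hE)
        obtain ⟨my, hmyb, hmy, hym⟩ := repC2 y hy (Walk.snd_mem_support_of_mem_edges C2 hE)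
        subst hxm hym
        obtain ⟨k, hk, hkEq, hrel⟩ := edgeC2 mx my (by omega) (by omega) hE
        omega
      · obtain ⟨mx, hmxb, hmx, hxm⟩ := repP x hx (Walk.fst_mem_support_of_mem_edges P hE)
        obtain ⟨my, hmyb, hmy, hym⟩ := repP y hy (Walk.snd_mem_support_of_mem_edges P hE)
        subst hxm hym
        obtain ⟨k, hk, hkEq, hrel⟩ := edgeP mx my (by omega) (by omega) hE
        omega
    have hcard : S.card = a + b + c + 1 := by
      have hcA1 : A1.card = i := by
        rw [hA1, Finset.card_image_of_injOn, Nat.card_Icc]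
        · omega
        · intro t ht t' ht' htt
          simp only [Finset.coe_Icc, Set.mem_Icc] at ht ht'
          have := injC1 (i := 2 * t) (j := 2 * t') (by omega) (by omega) htt
          omega
      have hcA2 : A2.card = a - i := by
        rw [hA2, Finset.card_image_of_injOn, Nat.card_Icc]
        · omega
        · intro t ht t' ht' htt
          simp only [Finset.coe_Icc, Set.mem_Icc] at ht ht'
          have := injC1 (i := 2 * t + 1) (j := 2 * t' + 1) (by omega) (by omega) htt
          omega
      have hcA3 : A3.card = c + 1 := by
        rw [hA3, Finset.card_image_of_injOn, Nat.card_Icc]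
        · omega
        · intro t ht t' ht' htt
          simp only [Finset.coe_Icc, Set.mem_Icc] at ht ht'
          have := injP (i := 2 * t) (j := 2 * t') (by omega) (by omega) htt
          omega
      have hcA4 : A4.card = b := by
        rw [hA4, Finset.card_image_of_injOn, Nat.card_Icc]
        · omega
        · intro t ht t' ht' htt
          simp only [Finset.coe_Icc, Set.mem_Icc] at ht ht'
          have := injC2 (i := 2 * t + 1) (j := 2 * t' + 1) (by omega) (by omega) htt
          omega
      have hd12' : Disjoint A1 A2 := by
        rw [Finset.disjoint_left]
        rintro z hz1 hz2
        simp only [hA1, hA2, Finset.mem_image, Finset.mem_Icc] at hz1 hz2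
        obtain ⟨t, ht, rfl⟩ := hz1
        obtain ⟨t', ht', htt⟩ := hz2
        have := injC1 (i := 2 * t' + 1) (j := 2 * t) (by omega) (by omega) htt
        omega
      have hd123 : Disjoint (A1 ∪ A2) A3 := by
        rw [Finset.disjoint_left]
        rintro z hz1 hz3
        simp only [hA3, Finset.mem_image, Finset.mem_Icc] at hz3
        obtain ⟨t, ht, rfl⟩ := hz3
        have hzP : P.getVert (2 * t) ∈ P.support := memP _ (by omega)
        have hzC1 : P.getVert (2 * t) ∈ C1.support := by
          rcases Finset.mem_union.mp hz1 with hz | hz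
          · simp only [hA1, Finset.mem_image, Finset.mem_Icc] at hz
            obtain ⟨t', ht', htt⟩ := hz
            rw [← htt]; exact memC1 _ (by omega)
          · simp only [hA2, Finset.mem_image, Finset.mem_Icc] at hz
            obtain ⟨t', ht', htt⟩ := hz
            rw [← htt]; exact memC1 _ (by omega)
        have hveq : P.getVert (2 * t) = v := hPC1 _ hzP hzC1
        have h0 : P.getVert (2 * t) = v := hveq
        rcases Finset.mem_union.mp hz1 with hz | hz
        · simp only [hA1, Finset.mem_image, Finset.mem_Icc] at hz
          obtain ⟨t', ht', htt⟩ := hz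
          rw [hveq] at htt
          have h0' : C1.getVert (2 * t') = C1.getVert 0 := by rw [htt, Walk.getVert_zero]
          have := injC1 (by omega) (by omega) h0'
          omega
        · simp only [hA2, Finset.mem_image, Finset.mem_Icc] at hz
          obtain ⟨t', ht', htt⟩ := hz
          rw [hveq] at htt
          have h0' : C1.getVert (2 * t' + 1) = C1.getVert 0 := by rw [htt, Walk.getVert_zero]
          have := injC1 (by omega) (by omega) h0'
          omega
      have hd1234 : Disjoint ((A1 ∪ A2) ∪ A3) A4 := by
        rw [Finset.disjoint_left]
        rintro z hz1 hz4
        simp only [hA4, Finset.mem_image, Finset.mem_Icc] at hz4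
        obtain ⟨t, ht, rfl⟩ := hz4
        have hzC2 : C2.getVert (2 * t + 1) ∈ C2.support := memC2 _ (by omega)
        rcases Finset.mem_union.mp hz1 with hz | hz
        · have hzC1 : C2.getVert (2 * t + 1) ∈ C1.support := by
            rcases Finset.mem_union.mp hz with hz' | hz'
            · simp only [hA1, Finset.mem_image, Finset.mem_Icc] at hz'
              obtain ⟨t', ht', htt⟩ := hz'
              rw [← htt]; exact memC1 _ (by omega)
            · simp only [hA2, Finset.mem_image, Finset.mem_Icc] at hz'
              obtain ⟨t', ht', htt⟩ := hz'
              rw [← htt]; exact memC1 _ (by omega)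
          exact hd12 _ hzC1 hzC2
        · simp only [hA3, Finset.mem_image, Finset.mem_Icc] at hz
          obtain ⟨t', ht', htt⟩ := hz
          have hzP : P.getVert (2 * t') ∈ P.support := memP _ (by omega)
          have hweq : P.getVert (2 * t') = w := hPC2 _ hzP (htt ▸ hzC2)
          have h0 : P.getVert (2 * t') = P.getVert P.length := by
            rw [hweq, Walk.getVert_length]
          have := injP (by omega) le_rfl h0
          omega
      rw [hS, Finset.card_union_of_disjoint hd1234, Finset.card_union_of_disjoint hd123,
        Finset.card_union_of_disjoint hd12', hcA1, hcA2, hcA3, hcA4]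
      omega
    exact conclude S hindep hcard
  · -- Case 2 : e lies on P
    obtain ⟨j, hj, hej⟩ := (walk_edges_getVert P e).mp heP
    obtain ⟨i2, hji⟩ := locP j hj hej
    have hic : i2 + 1 ≤ c := by omega
    set A1 : Finset V := (Finset.Icc 0 (a - 1)).image (fun t => C1.getVert (2 * t + 1)) with hA1
    set A2 : Finset V := (Finset.Icc 0 (b - 1)).image (fun t => C2.getVert (2 * t + 1)) with hA2
    set A3 : Finset V := (Finset.Icc 0 i2).image (fun t => P.getVert (2 * t + 1)) with hA3
    set A4 : Finset V := (Finset.Icc (i2 + 1) c).image (fun t => P.getVert (2 * t)) with hA4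
    set S : Finset V := ((A1 ∪ A2) ∪ A3) ∪ A4 with hS
    have repC1 : ∀ z ∈ S, z ∈ C1.support →
        ∃ m, m % 2 = 1 ∧ m ≤ 2 * a - 1 ∧ z = C1.getVert m := by
      intro z hz hzC1
      simp only [hS, hA1, hA2, hA3, hA4, Finset.mem_union, Finset.mem_image,
        Finset.mem_Icc] at hz
      rcases hz with ((⟨t, ht, rfl⟩ | ⟨t, ht, rfl⟩) | ⟨t, ht, rfl⟩) | ⟨t, ht, rfl⟩
      · exact ⟨2 * t + 1, by omega, by omega, rfl⟩
      · exact absurd hzC1 (fun hcon => hd12 _ hcon (memC2 _ (by omega)))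
      · exfalso
        have : P.getVert (2 * t + 1) = v := hPC1 _ (memP _ (by omega)) hzC1
        have h0 : P.getVert (2 * t + 1) = P.getVert 0 := by rw [this, Walk.getVert_zero]
        have := injP (by omega) (by omega) h0
        omega
      · exfalso
        have : P.getVert (2 * t) = v := hPC1 _ (memP _ (by omega)) hzC1
        have h0 : P.getVert (2 * t) = P.getVert 0 := by rw [this, Walk.getVert_zero]
        have := injP (by omega) (by omega) h0
        omega
    have repC2 : ∀ z ∈ S, z ∈ C2.support →
        ∃ m, m % 2 = 1 ∧ m ≤ 2 * b - 1 ∧ z = C2.getVert m := by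
      intro z hz hzC2
      simp only [hS, hA1, hA2, hA3, hA4, Finset.mem_union, Finset.mem_image,
        Finset.mem_Icc] at hz
      rcases hz with ((⟨t, ht, rfl⟩ | ⟨t, ht, rfl⟩) | ⟨t, ht, rfl⟩) | ⟨t, ht, rfl⟩
      · exact absurd hzC2 (hd12 _ (memC1 _ (by omega)))
      · exact ⟨2 * t + 1, by omega, by omega, rfl⟩
      · exfalso
        have : P.getVert (2 * t + 1) = w := hPC2 _ (memP _ (by omega)) hzC2
        have h0 : P.getVert (2 * t + 1) = P.getVert P.length := by
          rw [this, Walk.getVert_length]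
        have := injP (by omega) le_rfl h0
        omega
      · exfalso
        have : P.getVert (2 * t) = w := hPC2 _ (memP _ (by omega)) hzC2
        have h0 : P.getVert (2 * t) = P.getVert P.length := by
          rw [this, Walk.getVert_length]
        have := injP (by omega) le_rfl h0
        omega
    have repP : ∀ z ∈ S, z ∈ P.support → ∃ m,
        ((m % 2 = 1 ∧ m ≤ 2 * i2 + 1) ∨ (m % 2 = 0 ∧ 2 * i2 + 2 ≤ m ∧ m ≤ 2 * c)) ∧
          z = P.getVert m := by
      intro z hz hzP
      simp only [hS, hA1, hA2, hA3, hA4, Finset.mem_union, Finset.mem_image,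
        Finset.mem_Icc] at hz
      rcases hz with ((⟨t, ht, rfl⟩ | ⟨t, ht, rfl⟩) | ⟨t, ht, rfl⟩) | ⟨t, ht, rfl⟩
      · exfalso
        have : C1.getVert (2 * t + 1) = v := hPC1 _ hzP (memC1 _ (by omega))
        have h0 : C1.getVert (2 * t + 1) = C1.getVert 0 := by rw [this, Walk.getVert_zero]
        have := injC1 (by omega) (by omega) h0
        omega
      · exfalso
        have : C2.getVert (2 * t + 1) = w := hPC2 _ hzP (memC2 _ (by omega))
        have h0 : C2.getVert (2 * t + 1) = C2.getVert 0 := by rw [this, Walk.getVert_zero]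
        have := injC2 (by omega) (by omega) h0
        omega
      · exact ⟨2 * t + 1, by omega, rfl⟩
      · exact ⟨2 * t, by omega, rfl⟩
    have hindep : IsIndep (K.deleteEdges {e}) ↑S := by
      intro x hx y hy hadj
      rw [SimpleGraph.deleteEdges_adj] at hadj
      obtain ⟨hK, hne⟩ := hadj
      rw [Set.mem_singleton_iff] at hne
      rw [Finset.mem_coe] at hx hy
      rcases (hedge s(x, y)).mp (K.mem_edgeSet.mpr hK) with hE | hE | hE
      · obtain ⟨mx, hmx, hmxb, hxm⟩ := repC1 x hx (Walk.fst_mem_support_of_mem_edges C1 hE)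
        obtain ⟨my, hmy, hmyb, hym⟩ := repC1 y hy (Walk.snd_mem_support_of_mem_edges C1 hE)
        subst hxm hym
        obtain ⟨k, hk, hkEq, hrel⟩ := edgeC1 mx my (by omega) (by omega) hE
        omega
      · obtain ⟨mx, hmx, hmxb, hxm⟩ := repC2 x hx (Walk.fst_mem_support_of_mem_edges C2 hE)
        obtain ⟨my, hmy, hmyb, hym⟩ := repC2 y hy (Walk.snd_mem_support_of_mem_edges C2 hE)
        subst hxm hym
        obtain ⟨k, hk, hkEq, hrel⟩ := edgeC2 mx my (by omega) (by omega) hE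
        omega
      · obtain ⟨mx, hmx, hxm⟩ := repP x hx (Walk.fst_mem_support_of_mem_edges P hE)
        obtain ⟨my, hmy, hym⟩ := repP y hy (Walk.snd_mem_support_of_mem_edges P hE)
        subst hxm hym
        obtain ⟨k, hk, hkEq, hrel⟩ := edgeP mx my (by omega) (by omega) hE
        by_cases hkj : k = j
        · exact hne (by rw [hkEq, hkj, ← hej])
        · omega
    have hcard : S.card = a + b + c + 1 := by
      have hcA1 : A1.card = a := by
        rw [hA1, Finset.card_image_of_injOn, Nat.card_Icc]
        · omega
        · intro t ht t' ht' htt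
          simp only [Finset.coe_Icc, Set.mem_Icc] at ht ht'
          have := injC1 (i := 2 * t + 1) (j := 2 * t' + 1) (by omega) (by omega) htt
          omega
      have hcA2 : A2.card = b := by
        rw [hA2, Finset.card_image_of_injOn, Nat.card_Icc]
        · omega
        · intro t ht t' ht' htt
          simp only [Finset.coe_Icc, Set.mem_Icc] at ht ht'
          have := injC2 (i := 2 * t + 1) (j := 2 * t' + 1) (by omega) (by omega) htt
          omega
      have hcA3 : A3.card = i2 + 1 := by
        rw [hA3, Finset.card_image_of_injOn, Nat.card_Icc]
        · omega
        · intro t ht t' ht' htt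
          simp only [Finset.coe_Icc, Set.mem_Icc] at ht ht'
          have := injP (i := 2 * t + 1) (j := 2 * t' + 1) (by omega) (by omega) htt
          omega
      have hcA4 : A4.card = c - i2 := by
        rw [hA4, Finset.card_image_of_injOn, Nat.card_Icc]
        · omega
        · intro t ht t' ht' htt
          simp only [Finset.coe_Icc, Set.mem_Icc] at ht ht'
          have := injP (i := 2 * t) (j := 2 * t') (by omega) (by omega) htt
          omega
      have hd12' : Disjoint A1 A2 := by
        rw [Finset.disjoint_left]
        rintro z hz1 hz2
        simp only [hA1, hA2, Finset.mem_image, Finset.mem_Icc] at hz1 hz2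
        obtain ⟨t, ht, rfl⟩ := hz1
        obtain ⟨t', ht', htt⟩ := hz2
        have hmem2 : C1.getVert (2 * t + 1) ∈ C2.support := by
          rw [← htt]; exact memC2 _ (by omega)
        exact hd12 _ (memC1 (2 * t + 1) (by omega)) hmem2
      have hPmem : ∀ z ∈ A3 ∪ A4, z ∈ P.support ∧ z ≠ v ∧ z ≠ w := by
        intro z hz
        simp only [hA3, hA4, Finset.mem_union, Finset.mem_image, Finset.mem_Icc] at hz
        rcases hz with ⟨t, ht, rfl⟩ | ⟨t, ht, rfl⟩
        · refine ⟨memP _ (by omega), ?_, ?_⟩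
          · intro hveq
            have h0 : P.getVert (2 * t + 1) = P.getVert 0 := by rw [hveq, Walk.getVert_zero]
            have := injP (by omega) (by omega) h0
            omega
          · intro hweq
            have h0 : P.getVert (2 * t + 1) = P.getVert P.length := by
              rw [hweq, Walk.getVert_length]
            have := injP (by omega) le_rfl h0
            omega
        · refine ⟨memP _ (by omega), ?_, ?_⟩
          · intro hveq
            have h0 : P.getVert (2 * t) = P.getVert 0 := by rw [hveq, Walk.getVert_zero]
            have := injP (by omega) (by omega) h0
            omega
          · intro hweq
            have h0 : P.getVert (2 * t) = P.getVert P.length := by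
              rw [hweq, Walk.getVert_length]
            have := injP (by omega) le_rfl h0
            omega
      have hd34 : Disjoint A3 A4 := by
        rw [Finset.disjoint_left]
        rintro z hz3 hz4
        simp only [hA3, hA4, Finset.mem_image, Finset.mem_Icc] at hz3 hz4
        obtain ⟨t, ht, rfl⟩ := hz3
        obtain ⟨t', ht', htt⟩ := hz4
        have := injP (i := 2 * t') (j := 2 * t + 1) (by omega) (by omega) htt
        omega
      have hd123 : Disjoint (A1 ∪ A2) A3 := by
        rw [Finset.disjoint_left]
        rintro z hz1 hz3
        have hPz := hPmem z (Finset.mem_union_left _ hz3)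
        rcases Finset.mem_union.mp hz1 with hz | hz
        · simp only [hA1, Finset.mem_image, Finset.mem_Icc] at hz
          obtain ⟨t, ht, rfl⟩ := hz
          exact hPz.2.1 (hPC1 _ hPz.1 (memC1 _ (by omega)))
        · simp only [hA2, Finset.mem_image, Finset.mem_Icc] at hz
          obtain ⟨t, ht, rfl⟩ := hz
          exact hPz.2.2 (hPC2 _ hPz.1 (memC2 _ (by omega)))
      have hd1234 : Disjoint ((A1 ∪ A2) ∪ A3) A4 := by
        rw [Finset.disjoint_left]
        rintro z hz1 hz4
        have hPz := hPmem z (Finset.mem_union_right _ hz4)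
        rcases Finset.mem_union.mp hz1 with hz | hz3
        · rcases Finset.mem_union.mp hz with hz' | hz'
          · simp only [hA1, Finset.mem_image, Finset.mem_Icc] at hz'
            obtain ⟨t, ht, rfl⟩ := hz'
            exact hPz.2.1 (hPC1 _ hPz.1 (memC1 _ (by omega)))
          · simp only [hA2, Finset.mem_image, Finset.mem_Icc] at hz'
            obtain ⟨t, ht, rfl⟩ := hz'
            exact hPz.2.2 (hPC2 _ hPz.1 (memC2 _ (by omega)))
        · exact (Finset.disjoint_left.mp hd34) hz3 hz4
      rw [hS, Finset.card_union_of_disjoint hd1234, Finset.card_union_of_disjoint hd123,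
        Finset.card_union_of_disjoint hd12', hcA1, hcA2, hcA3, hcA4]
      omega
    exact conclude S hindep hcard

end Main


/-- If `K` is an even subdivision of `T` with perfect matching `M` (necessarily unique),
then for every edge `e` of `K` not in `M`, the graph `K - e` is König-Egerváry. -/
theorem evenSubdivT_deleteNonMatchingEdge_isKE {V : Type*} [Fintype V] (K : SimpleGraph V)
    (h : IsEvenSubdivT K) (M : K.Subgraph) (hM : M.IsPerfectMatching)
    (e : Sym2 V) (he : e ∈ K.edgeSet) (heM : e ∉ M.edgeSet) :
    IsKE (K.deleteEdges {e}) := by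
  obtain ⟨v, w, C1, C2, P, hC1, hC2, ho1, ho2, hP, hoP, hd12, hPC1, hPC2, hcov, hedge⟩ := h
  rcases (hedge e).mp he with h1 | h2 | h3
  · exact aux_main K v w C1 C2 P hC1 hC2 ho1 ho2 hP hoP hd12 hPC1 hPC2 hcov hedge
      M hM e heM (Or.inl h1)
  · have hrevP : P.reverse.IsPath := hP.reverse
    have hrevlen : Odd P.reverse.length := by simpa using hoP
    refine aux_main K w v C2 C1 P.reverse hC2 hC1 ho2 ho1 hrevP hrevlen
      (fun x hx2 hx1 => hd12 x hx1 hx2)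
      (fun x hxP hx2 => hPC2 x (by simpa [Walk.support_reverse] using hxP) hx2)
      (fun x hxP hx1 => hPC1 x (by simpa [Walk.support_reverse] using hxP) hx1)
      (fun x => by rcases hcov x with hx | hx | hx
                   · exact Or.inr (Or.inl hx)
                   · exact Or.inl hx
                   · exact Or.inr (Or.inr (by simpa [Walk.support_reverse] using hx)))
      (fun e' => by rw [hedge e']
                    simp only [Walk.edges_reverse, List.mem_reverse]
                    tauto)
      M hM e heM (Or.inl h2)
  · exact aux_main K v w C1 C2 P hC1 hC2 ho1 ho2 hP hoP hd12 hPC1 hPC2 hcov hedge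
      M hM e heM (Or.inr h3)
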